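/- Fix k ≥ 1. (i) For every ℓ with 1 ≤ ℓ ≤ k−1, the number of permutations π of size k such that π⁻¹ has exactly one descent and that descent is at position ℓ equals C(k,ℓ) − 1, and every such π avoids the pattern 321. (ii) Consequently, the number of permutations π of size k whose inverse has exactly one descent equals 2^k − (k+1), and hence Σ_{π ∈ Av^k(321)} P_321(π) = 1. -/

import Mathlib

open Finset Filter
open scoped Topology Classical

noncomputable section

/-- The permutation 231 (as a permutation of `Fin 3`, 0-indexed). -/
def perm231 : Equiv.Perm (Fin 3) := ⟨![1, 2, 0], ![2, 0, 1], by decide, by decide⟩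

/-- The permutation 321 (as a permutation of `Fin 3`, 0-indexed). -/
def perm321 : Equiv.Perm (Fin 3) := ⟨![2, 1, 0], ![2, 1, 0], by decide, by decide⟩

/-- `σ` contains the pattern `π`: some (not necessarily consecutive) subsequence of `σ`
is in the same relative order as `π`. -/
def Contains {k n : ℕ} (π : Equiv.Perm (Fin k)) (σ : Equiv.Perm (Fin n)) : Prop :=
  ∃ f : Fin k → Fin n, StrictMono f ∧ ∀ a b : Fin k, σ (f a) < σ (f b) ↔ π a < π b

/-- `σ` avoids the pattern `π`. -/
def Avoids {k n : ℕ} (π : Equiv.Perm (Fin k)) (σ : Equiv.Perm (Fin n)) : Prop := ¬ Contains π σ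

/-- The set `Avⁿ(ρ)` of `ρ`-avoiding permutations of size `n`. -/
def AvSet {k : ℕ} (ρ : Equiv.Perm (Fin k)) (n : ℕ) : Finset (Equiv.Perm (Fin n)) :=
  Finset.univ.filter fun σ => Avoids ρ σ

/-- The (0-indexed) value of `σ` at the (0-indexed) position `j`, with junk value `0`
out of range. -/
def pv {n : ℕ} (σ : Equiv.Perm (Fin n)) (j : ℕ) : ℕ :=
  if h : j < n then (σ ⟨j, h⟩ : ℕ) else 0

/-- The length-`k` window of `σ` starting at the (0-indexed) position `i` is in the same
relative order as `π`, i.e. `pat_{[i+1,i+k]}(σ) = π` (in the 1-indexed notation). -/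
def WindowMatch {k n : ℕ} (π : Equiv.Perm (Fin k)) (σ : Equiv.Perm (Fin n)) (i : ℕ) : Prop :=
  ∀ a b : Fin k, (pv σ (i + a) < pv σ (i + b) ↔ π a < π b)

/-- `π` occurs consecutively in `σ` at the (0-indexed) position `i`. -/
def IsOccAt {k n : ℕ} (π : Equiv.Perm (Fin k)) (σ : Equiv.Perm (Fin n)) (i : ℕ) : Prop :=
  i + k ≤ n ∧ WindowMatch π σ i

/-- Number of consecutive occurrences of `π` in the (0-indexed) window `[lo, hi)` of `σ`.
This equals `c-occ(π, pat_{[lo+1,hi]}(σ))` in the notation of the paper. -/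
def cOccWin {k n : ℕ} (π : Equiv.Perm (Fin k)) (σ : Equiv.Perm (Fin n)) (lo hi : ℕ) : ℕ :=
  ((Finset.range n).filter fun i => lo ≤ i ∧ i + k ≤ hi ∧ WindowMatch π σ i).card

/-- `c-occ(π,σ)`: the number of consecutive occurrences of `π` in `σ`. -/
def cOcc {k n : ℕ} (π : Equiv.Perm (Fin k)) (σ : Equiv.Perm (Fin n)) : ℕ := cOccWin π σ 0 n

/-- `|LRMax(π)|`: the number of left-to-right maxima of `π`. -/
def lrMax {k : ℕ} (π : Equiv.Perm (Fin k)) : ℕ :=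
  (Finset.univ.filter fun i : Fin k => ∀ j : Fin k, j < i → π j < π i).card

/-- `|RLMax(π)|`: the number of right-to-left maxima of `π`. -/
def rlMax {k : ℕ} (π : Equiv.Perm (Fin k)) : ℕ :=
  (Finset.univ.filter fun i : Fin k => ∀ j : Fin k, i < j → π j < π i).card

/-- `P_231(π) = 2^(|LRMax(π)| + |RLMax(π)|) / 2^(2|π|)`. -/
def P231 {k : ℕ} (π : Equiv.Perm (Fin k)) : ℝ :=
  2 ^ (lrMax π + rlMax π) / 2 ^ (2 * k)

end

noncomputable section

/-- The number of descents of `τ`: indices `i` (1-indexed, `1 ≤ i ≤ k-1`) with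
`τ_i > τ_{i+1}`. (Here `i : Fin k` is the 0-indexed position of the left entry.) -/
def numDescents {k : ℕ} (τ : Equiv.Perm (Fin k)) : ℕ :=
  (Finset.univ.filter fun i : Fin k =>
    ∃ h : (i : ℕ) + 1 < k, τ ⟨(i : ℕ) + 1, h⟩ < τ i).card

/-- `P_321(π)`: equal to `(|π|+1)/2^|π|` if `π` is the identity, `1/2^|π|` if `π⁻¹` has
exactly one descent, and `0` otherwise. -/
def P321 {k : ℕ} (π : Equiv.Perm (Fin k)) : ℝ :=
  if π = 1 then (k + 1) / 2 ^ k
  else if numDescents π⁻¹ = 1 then 1 / 2 ^ k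
  else 0

end

noncomputable section

/-- `π⁻¹` has a descent at the (1-indexed) position `ℓ`, i.e. `(π⁻¹)_ℓ > (π⁻¹)_{ℓ+1}`
(0-indexed: the entries of `π⁻¹` at positions `ℓ-1` and `ℓ`). -/
def InvDescAt {k : ℕ} (π : Equiv.Perm (Fin k)) (ℓ : ℕ) : Prop :=
  ∃ h : ℓ < k, π⁻¹ ⟨ℓ, h⟩ < π⁻¹ ⟨ℓ - 1, Nat.lt_of_le_of_lt (Nat.sub_le ℓ 1) h⟩

end
noncomputable section MyHelpers

lemma pv_mk {n : ℕ} (σ : Equiv.Perm (Fin n)) {j : ℕ} (h : j < n) :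
    pv σ j = (σ ⟨j, h⟩ : ℕ) := dif_pos h

lemma pv_coe {n : ℕ} (σ : Equiv.Perm (Fin n)) (i : Fin n) : pv σ (i : ℕ) = (σ i : ℕ) := by
  rw [pv_mk σ i.isLt]

lemma run_le (v : ℕ → ℕ) : ∀ (b a : ℕ), (∀ i, a ≤ i → i + 1 ≤ b → v i < v (i + 1)) →
    a ≤ b → v a ≤ v b := by
  intro b
  induction b with
  | zero => intro a _ hab; have : a = 0 := by omega
            subst this; exact le_refl _
  | succ b ih =>
    intro a h hab
    rcases Nat.lt_or_ge a (b + 1) with h1 | h2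
    · have ha : a ≤ b := by omega
      have hle := ih a (fun i hi hib => h i hi (by omega)) ha
      exact hle.trans (le_of_lt (h b (by omega) le_rfl))
    · have : a = b + 1 := by omega
      subst this; exact le_refl _

lemma run_lt (v : ℕ → ℕ) (a b : ℕ) (h : ∀ i, a ≤ i → i + 1 ≤ b → v i < v (i + 1))
    (hab : a < b) : v a < v b := by
  have h1 : v a ≤ v (b - 1) := run_le v (b - 1) a (fun i hi hib => h i hi (by omega)) (by omega)
  have h2 : v (b - 1) < v (b - 1 + 1) := h (b - 1) (by omega) (by omega)
  rw [show b - 1 + 1 = b by omega] at h2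
  exact lt_of_le_of_lt h1 h2

/-- The descent set of `τ` (same filter as in `numDescents`). -/
def descSet {k : ℕ} (τ : Equiv.Perm (Fin k)) : Finset (Fin k) :=
  Finset.univ.filter fun i : Fin k =>
    ∃ h : (i : ℕ) + 1 < k, τ ⟨(i : ℕ) + 1, h⟩ < τ i

lemma numDescents_eq {k : ℕ} (τ : Equiv.Perm (Fin k)) : numDescents τ = (descSet τ).card := rfl

lemma mem_descSet {k : ℕ} {τ : Equiv.Perm (Fin k)} {i : Fin k} :
    i ∈ descSet τ ↔ (i : ℕ) + 1 < k ∧ pv τ ((i : ℕ) + 1) < pv τ (i : ℕ) := by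
  simp only [descSet, Finset.mem_filter, Finset.mem_univ, true_and]
  constructor
  · rintro ⟨h, hlt⟩
    refine ⟨h, ?_⟩
    rw [pv_mk τ h, pv_coe]
    exact hlt
  · rintro ⟨h, hlt⟩
    refine ⟨h, ?_⟩
    rw [pv_mk τ h, pv_coe] at hlt
    exact hlt

lemma incr_of_not_desc {k : ℕ} (τ : Equiv.Perm (Fin k)) {i : ℕ} (h1 : i + 1 < k)
    (h2 : ¬ pv τ (i + 1) < pv τ i) : pv τ i < pv τ (i + 1) := by
  rw [pv_mk τ h1, pv_mk τ (show i < k by omega)] at *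
  have hne : τ ⟨i, by omega⟩ ≠ τ ⟨i + 1, h1⟩ := by
    intro he
    have := τ.injective he
    simp [Fin.ext_iff] at this
  have hne' : (τ ⟨i, by omega⟩ : ℕ) ≠ (τ ⟨i + 1, h1⟩ : ℕ) := fun he => hne (Fin.ext he)
  omega

end MyHelpers
noncomputable section MyHelpers2

/-- `τ` has exactly one descent, at the 1-indexed position `ℓ` (explicit form). -/
def OneDescAt {k : ℕ} (τ : Equiv.Perm (Fin k)) (ℓ : ℕ) : Prop :=
  (∀ i : ℕ, i + 1 < k → i + 1 ≠ ℓ → pv τ i < pv τ (i + 1)) ∧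
    ℓ < k ∧ 1 ≤ ℓ ∧ pv τ ℓ < pv τ (ℓ - 1)

lemma descSet_eq {k ℓ : ℕ} {τ : Equiv.Perm (Fin k)} (h : OneDescAt τ ℓ) :
    descSet τ = {(⟨ℓ - 1, by obtain ⟨-, h2, h3, -⟩ := h; omega⟩ : Fin k)} := by
  obtain ⟨hstep, hℓk, hℓ1, hdesc⟩ := h
  ext i
  rw [mem_descSet, Finset.mem_singleton]
  constructor
  · rintro ⟨h1, h2⟩
    by_contra hne
    have hiv : (i : ℕ) ≠ ℓ - 1 := fun he => hne (Fin.ext he)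
    have : (i : ℕ) + 1 ≠ ℓ := by omega
    have := hstep i h1 this
    omega
  · rintro rfl
    refine ⟨show ℓ - 1 + 1 < k by omega, ?_⟩
    show pv τ (ℓ - 1 + 1) < pv τ (ℓ - 1)
    rw [show ℓ - 1 + 1 = ℓ by omega]
    exact hdesc

lemma oneDescAt_numDescents {k ℓ : ℕ} {τ : Equiv.Perm (Fin k)} (h : OneDescAt τ ℓ) :
    numDescents τ = 1 := by
  rw [numDescents_eq, descSet_eq h, Finset.card_singleton]

lemma oneDescAt_of {k ℓ : ℕ} (τ : Equiv.Perm (Fin k)) (h1 : numDescents τ = 1)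
    (hℓ1 : 1 ≤ ℓ) (hℓk : ℓ < k) (hd : pv τ ℓ < pv τ (ℓ - 1)) : OneDescAt τ ℓ := by
  have hmem : (⟨ℓ - 1, by omega⟩ : Fin k) ∈ descSet τ := by
    rw [mem_descSet]
    refine ⟨show ℓ - 1 + 1 < k by omega, ?_⟩
    show pv τ (ℓ - 1 + 1) < pv τ (ℓ - 1)
    rw [show ℓ - 1 + 1 = ℓ by omega]
    exact hd
  rw [numDescents_eq] at h1
  have huniq : ∀ j ∈ descSet τ, j = (⟨ℓ - 1, by omega⟩ : Fin k) := by
    intro j hj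
    exact Finset.card_le_one.mp (le_of_eq h1) j hj _ hmem
  refine ⟨?_, hℓk, hℓ1, hd⟩
  intro i hi hne
  by_contra hnot
  have hdesc : pv τ (i + 1) < pv τ i := by
    by_contra h'
    exact hnot (incr_of_not_desc τ hi h')
  have hm : (⟨i, by omega⟩ : Fin k) ∈ descSet τ := by
    rw [mem_descSet]
    exact ⟨hi, hdesc⟩
  have := huniq _ hm
  rw [Fin.ext_iff] at this
  simp at this
  omega

lemma oneDescAt_iff_inv {k ℓ : ℕ} (π : Equiv.Perm (Fin k)) (hℓ1 : 1 ≤ ℓ) (hℓk : ℓ < k) :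
    (numDescents π⁻¹ = 1 ∧ InvDescAt π ℓ) ↔ OneDescAt π⁻¹ ℓ := by
  constructor
  · rintro ⟨h1, h, hd⟩
    refine oneDescAt_of _ h1 hℓ1 hℓk ?_
    rw [pv_mk _ h, pv_mk _ (show ℓ - 1 < k by omega)]
    exact hd
  · intro h
    refine ⟨oneDescAt_numDescents h, hℓk, ?_⟩
    have hd := h.2.2.2
    rw [pv_mk _ hℓk, pv_mk _ (show ℓ - 1 < k by omega)] at hd
    exact hd

end MyHelpers2
noncomputable section MyHelpers3

lemma contains321_iff {n : ℕ} (σ : Equiv.Perm (Fin n)) :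
    Contains perm321 σ ↔ ∃ p q r : Fin n, p < q ∧ q < r ∧ σ r < σ q ∧ σ q < σ p := by
  constructor
  · rintro ⟨f, hm, hp⟩
    refine ⟨f 0, f 1, f 2, hm (by decide), hm (by decide), ?_, ?_⟩
    · exact (hp 2 1).2 (by decide)
    · exact (hp 1 0).2 (by decide)
  · rintro ⟨p, q, r, h1, h2, h3, h4⟩
    refine ⟨![p, q, r], ?_, ?_⟩
    · intro a b hab
      fin_cases a <;> fin_cases b <;>
        first
          | exact absurd hab (by decide)
          | exact h1
          | exact h2
          | exact h1.trans h2
    · intro a b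
      fin_cases a <;> fin_cases b <;>
        simp only [Matrix.cons_val_zero, Matrix.cons_val_one, Matrix.head_cons,
          Matrix.cons_val_two, Matrix.tail_cons] <;>
        constructor <;> intro hh <;>
        first
          | decide
          | exact absurd hh (lt_irrefl _)
          | exact absurd hh (asymm h3)
          | exact absurd hh (asymm h4)
          | exact absurd hh (asymm (h3.trans h4))
          | exact h3
          | exact h4
          | exact h3.trans h4
          | exact absurd hh (by decide)

lemma contains321_inv {n : ℕ} (σ : Equiv.Perm (Fin n)) (h : Contains perm321 σ) :
    Contains perm321 σ⁻¹ := by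
  rw [contains321_iff] at h ⊢
  obtain ⟨p, q, r, h1, h2, h3, h4⟩ := h
  refine ⟨σ r, σ q, σ p, h3, h4, ?_, ?_⟩ <;>
    simp only [Equiv.Perm.inv_def, Equiv.symm_apply_apply] <;> assumption

lemma avoids_of_one_descent {k : ℕ} (π : Equiv.Perm (Fin k)) (h : numDescents π⁻¹ = 1) :
    Avoids perm321 π := by
  intro hc
  obtain ⟨p, q, r, hpq, hqr, h1, h2⟩ := (contains321_iff π⁻¹).mp (contains321_inv π hc)
  have hfind : ∀ a b : Fin k, a < b → (π⁻¹ b : ℕ) < (π⁻¹ a : ℕ) →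
      ∃ d : ℕ, (a : ℕ) ≤ d ∧ d + 1 ≤ (b : ℕ) ∧ d + 1 < k ∧ pv π⁻¹ (d + 1) < pv π⁻¹ d := by
    intro a b hab hba
    by_contra hno
    push_neg at hno
    have hrun : pv π⁻¹ (a : ℕ) < pv π⁻¹ (b : ℕ) := by
      refine run_lt _ _ _ (fun i hi hib => ?_) hab
      have hik : i + 1 < k := lt_of_le_of_lt hib b.isLt
      exact incr_of_not_desc _ hik (not_lt.mpr (hno i hi hib hik))
    rw [pv_coe, pv_coe] at hrun
    omega
  obtain ⟨d1, hd1a, hd1b, hd1k, hd1⟩ := hfind p q hpq h2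
  obtain ⟨d2, hd2a, hd2b, hd2k, hd2⟩ := hfind q r hqr h1
  have hm1 : (⟨d1, by omega⟩ : Fin k) ∈ descSet π⁻¹ := mem_descSet.mpr ⟨hd1k, hd1⟩
  have hm2 : (⟨d2, by omega⟩ : Fin k) ∈ descSet π⁻¹ := mem_descSet.mpr ⟨hd2k, hd2⟩
  rw [numDescents_eq] at h
  have := Finset.card_le_one.mp (le_of_eq h) _ hm1 _ hm2
  rw [Fin.ext_iff] at this
  simp at this
  omega

end MyHelpers3
noncomputable section MyHelpers4

/-- The initial segment `{0, …, ℓ-1}` of `Fin k`. -/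
def S0 (k ℓ : ℕ) : Finset (Fin k) := Finset.univ.filter fun i => (i : ℕ) < ℓ

lemma mem_S0 {k ℓ : ℕ} {i : Fin k} : i ∈ S0 k ℓ ↔ (i : ℕ) < ℓ := by
  simp [S0]

lemma card_S0 {k ℓ : ℕ} (h : ℓ ≤ k) : (S0 k ℓ).card = ℓ := by
  have key : (S0 k ℓ).card = (Finset.univ : Finset (Fin ℓ)).card := by
    refine Finset.card_bij (fun (a : Fin k) (ha : a ∈ S0 k ℓ) => (⟨(a : ℕ), mem_S0.mp ha⟩ : Fin ℓ)) ?_ ?_ ?_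
    · intro a ha; exact Finset.mem_univ _
    · intro a₁ h₁ a₂ h₂ he
      rw [Fin.ext_iff] at he ⊢
      simpa using he
    · intro b _
      exact ⟨⟨(b : ℕ), lt_of_lt_of_le b.isLt h⟩, mem_S0.mpr b.isLt, rfl⟩
  simpa using key

/-- Canonical form: a permutation with one descent at `ℓ` is determined by the image of the
initial segment. -/
lemma eq_canon {k ℓ : ℕ} (hℓk : ℓ < k) (τ : Equiv.Perm (Fin k)) (hτ : OneDescAt τ ℓ)
    {S : Finset (Fin k)} (him : (S0 k ℓ).image τ = S) (hS : S.card = ℓ)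
    (hSc : Sᶜ.card = k - ℓ) :
    ∀ i : Fin k, τ i = if h : (i : ℕ) < ℓ then S.orderEmbOfFin hS ⟨i, h⟩
      else Sᶜ.orderEmbOfFin hSc ⟨(i : ℕ) - ℓ, by have := i.isLt; omega⟩ := by
  have hmemS : ∀ z : Fin k, z ∈ S ↔ ∃ a ∈ S0 k ℓ, τ a = z := by
    intro z
    rw [← him, Finset.mem_image]
  obtain ⟨hstep, -, -, -⟩ := hτ
  have hg1 : (fun j : Fin ℓ => τ ⟨(j : ℕ), lt_trans j.isLt hℓk⟩) = ⇑(S.orderEmbOfFin hS) := by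
    apply Finset.orderEmbOfFin_unique
    · intro x
      exact (hmemS _).mpr ⟨⟨(x : ℕ), lt_trans x.isLt hℓk⟩, mem_S0.mpr x.isLt, rfl⟩
    · intro x y hxy
      have hrun : pv τ (x : ℕ) < pv τ (y : ℕ) := by
        refine run_lt _ _ _ (fun i hi hib => hstep i (by have := y.isLt; omega)
          (by have := y.isLt; omega)) hxy
      rw [pv_mk _ (lt_trans x.isLt hℓk), pv_mk _ (lt_trans y.isLt hℓk)] at hrun
      exact hrun
  have hg2 : (fun j : Fin (k - ℓ) => τ ⟨ℓ + (j : ℕ), by have := j.isLt; omega⟩)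
      = ⇑(Sᶜ.orderEmbOfFin hSc) := by
    apply Finset.orderEmbOfFin_unique
    · intro x
      rw [Finset.mem_compl]
      rintro hmem
      obtain ⟨a, ha, he⟩ := (hmemS _).mp hmem
      have := τ.injective he
      rw [mem_S0] at ha
      rw [this] at ha
      simp at ha
    · intro x y hxy
      have hxy' : ℓ + (x : ℕ) < ℓ + (y : ℕ) := by
        have : (x : ℕ) < (y : ℕ) := hxy
        omega
      have hrun : pv τ (ℓ + (x : ℕ)) < pv τ (ℓ + (y : ℕ)) := by
        refine run_lt _ _ _ (fun i hi hib => hstep i (by have := y.isLt; omega)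
          (by omega)) hxy'
      rw [pv_mk _ (by have := x.isLt; omega), pv_mk _ (by have := y.isLt; omega)] at hrun
      exact hrun
  intro i
  by_cases h : (i : ℕ) < ℓ
  · rw [dif_pos h, ← hg1]
  · rw [dif_neg h, ← hg2]
    show τ i = τ ⟨ℓ + ((i : ℕ) - ℓ), _⟩
    congr 1
    rw [Fin.ext_iff]
    simp
    omega

end MyHelpers4
noncomputable section MyHelpers5

lemma card_count {k ℓ : ℕ} (hℓ1 : 1 ≤ ℓ) (hℓk : ℓ < k) :
    (Finset.univ.filter fun τ : Equiv.Perm (Fin k) => OneDescAt τ ℓ).card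
      = k.choose ℓ - 1 := by
  have hS0card : (S0 k ℓ).card = ℓ := card_S0 (le_of_lt hℓk)
  have hcompl : ∀ S : Finset (Fin k), S.card = ℓ → Sᶜ.card = k - ℓ := by
    intro S hS
    rw [Finset.card_compl, hS, Fintype.card_fin]
  have key : (Finset.univ.filter fun τ : Equiv.Perm (Fin k) => OneDescAt τ ℓ).card
      = (((Finset.univ : Finset (Fin k)).powersetCard ℓ).erase (S0 k ℓ)).card := by
    refine Finset.card_bij (fun (τ : Equiv.Perm (Fin k)) _ => (S0 k ℓ).image τ) ?_ ?_ ?_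
    -- membership
    · intro τ hτm
      have hτ := (Finset.mem_filter.mp hτm).2
      have hS : ((S0 k ℓ).image τ).card = ℓ := by
        rw [Finset.card_image_of_injective _ τ.injective, hS0card]
      rw [Finset.mem_erase]
      refine ⟨?_, Finset.mem_powersetCard.mpr ⟨Finset.subset_univ _, hS⟩⟩
      intro heq
      have heq' : (S0 k ℓ).image τ = S0 k ℓ := heq
      obtain ⟨hstep, hk', h1', hd⟩ := hτ
      have hm : τ ⟨ℓ - 1, Nat.lt_of_le_of_lt (Nat.sub_le ℓ 1) hℓk⟩ ∈ S0 k ℓ := by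
        have := Finset.mem_image_of_mem τ (mem_S0.mpr
          (show ((⟨ℓ - 1, Nat.lt_of_le_of_lt (Nat.sub_le ℓ 1) hℓk⟩ : Fin k) : ℕ) < ℓ
            from by show ℓ - 1 < ℓ; omega))
        rw [heq'] at this
        exact this
      have hm2 : τ ⟨ℓ, hℓk⟩ ∉ S0 k ℓ := by
        intro hmem
        have hmem' : τ ⟨ℓ, hℓk⟩ ∈ (S0 k ℓ).image τ := by rw [heq']; exact hmem
        rw [Finset.mem_image] at hmem'
        obtain ⟨a, ha, he⟩ := hmem'
        have := τ.injective he
        rw [mem_S0] at ha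
        rw [this] at ha
        simp at ha
      rw [pv_mk _ hℓk, pv_mk _ (Nat.lt_of_le_of_lt (Nat.sub_le ℓ 1) hℓk)] at hd
      rw [mem_S0] at hm
      rw [mem_S0] at hm2
      omega
    -- injectivity
    · intro τ1 h1 τ2 h2 he
      have hS1 : ((S0 k ℓ).image τ1).card = ℓ := by
        rw [Finset.card_image_of_injective _ τ1.injective, hS0card]
      have c1 := eq_canon hℓk τ1 (Finset.mem_filter.mp h1).2 rfl hS1 (hcompl _ hS1)
      have c2 := eq_canon hℓk τ2 (Finset.mem_filter.mp h2).2 he.symm hS1 (hcompl _ hS1)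
      apply Equiv.ext
      intro i
      rw [c1 i, c2 i]
    -- surjectivity
    · intro S hSE
      rw [Finset.mem_erase, Finset.mem_powersetCard] at hSE
      obtain ⟨hne, -, hS⟩ := hSE
      have hSc := hcompl S hS
      set f : Fin k → Fin k := fun i =>
        if h : (i : ℕ) < ℓ then S.orderEmbOfFin hS ⟨i, h⟩
        else Sᶜ.orderEmbOfFin hSc ⟨(i : ℕ) - ℓ, by have := i.isLt; omega⟩ with hf
      have hinj : Function.Injective f := by
        intro i j he
        rw [hf] at he
        simp only at he
        by_cases hi : (i : ℕ) < ℓ <;> by_cases hj : (j : ℕ) < ℓ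
        · rw [dif_pos hi, dif_pos hj] at he
          have := (S.orderEmbOfFin hS).injective he
          rw [Fin.ext_iff] at this ⊢
          simpa using this
        · rw [dif_pos hi, dif_neg hj] at he
          have m1 := Finset.orderEmbOfFin_mem S hS ⟨i, hi⟩
          rw [he] at m1
          have m2 := Finset.orderEmbOfFin_mem Sᶜ hSc ⟨(j : ℕ) - ℓ, by have := j.isLt; omega⟩
          rw [Finset.mem_compl] at m2
          exact absurd m1 m2
        · rw [dif_neg hi, dif_pos hj] at he
          have m1 := Finset.orderEmbOfFin_mem S hS ⟨j, hj⟩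
          rw [← he] at m1
          have m2 := Finset.orderEmbOfFin_mem Sᶜ hSc ⟨(i : ℕ) - ℓ, by have := i.isLt; omega⟩
          rw [Finset.mem_compl] at m2
          exact absurd m1 m2
        · rw [dif_neg hi, dif_neg hj] at he
          have := (Sᶜ.orderEmbOfFin hSc).injective he
          rw [Fin.ext_iff] at this ⊢
          simp at this ⊢
          omega
      let τ : Equiv.Perm (Fin k) := Equiv.ofBijective f (Finite.injective_iff_bijective.mp hinj)
      have happ : ∀ i, τ i = f i := fun i => rfl
      have him : (S0 k ℓ).image τ = S := by
        apply Finset.eq_of_subset_of_card_le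
        · intro x hx
          rw [Finset.mem_image] at hx
          obtain ⟨a, ha, rfl⟩ := hx
          rw [happ, hf]
          simp only
          rw [dif_pos (mem_S0.mp ha)]
          exact Finset.orderEmbOfFin_mem S hS _
        · rw [Finset.card_image_of_injective _ τ.injective, hS0card, hS]
      refine ⟨τ, Finset.mem_filter.mpr ⟨Finset.mem_univ _, ?_, hℓk, hℓ1, ?_⟩, him⟩
      -- the increasing steps
      · intro i hi hne'
        rw [pv_mk _ (show i < k by omega), pv_mk _ hi, happ, happ, hf]
        simp only
        by_cases hlt : i + 1 < ℓ
        · rw [dif_pos (by omega), dif_pos hlt]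
          exact (S.orderEmbOfFin hS).strictMono (show (⟨i, by omega⟩ : Fin ℓ) < ⟨i + 1, hlt⟩
            from by rw [Fin.mk_lt_mk]; omega)
        · have hge : ℓ ≤ i := by omega
          rw [dif_neg (by omega), dif_neg (by omega)]
          exact (Sᶜ.orderEmbOfFin hSc).strictMono
            (show (⟨i - ℓ, by omega⟩ : Fin (k - ℓ)) < ⟨i + 1 - ℓ, by omega⟩
              from by rw [Fin.mk_lt_mk]; omega)
      -- the descent
      · rw [pv_mk _ hℓk, pv_mk _ (show ℓ - 1 < k by omega), happ, happ, hf]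
        simp only
        rw [dif_pos (show ℓ - 1 < ℓ by omega), dif_neg (lt_irrefl ℓ)]
        have hScne : Sᶜ.Nonempty := Finset.card_pos.mp (by omega)
        have hSne : S.Nonempty := Finset.card_pos.mp (by omega)
        have e0 : (⟨ℓ - ℓ, by omega⟩ : Fin (k - ℓ)) = ⟨0, by omega⟩ := Fin.ext (show ℓ - ℓ = 0 by omega)
        rw [e0, Finset.orderEmbOfFin_zero hSc (by omega)]
        have emax : S.orderEmbOfFin hS ⟨ℓ - 1, by omega⟩ = S.max' hSne := by
          have := Finset.orderEmbOfFin_last hS (show 0 < ℓ by omega)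
          convert this using 2
        rw [emax]
        -- now: min' Sᶜ < max' S
        have hx : (S \ S0 k ℓ).Nonempty := by
          rw [Finset.sdiff_nonempty]
          intro hsub
          exact hne (Finset.eq_of_subset_of_card_le hsub (by rw [hS0card, hS]))
        have hy : (S0 k ℓ \ S).Nonempty := by
          rw [Finset.sdiff_nonempty]
          intro hsub
          exact hne (Finset.eq_of_subset_of_card_le hsub (by rw [hS0card, hS])).symm
        obtain ⟨x, hxm⟩ := hx
        obtain ⟨y, hym⟩ := hy
        rw [Finset.mem_sdiff, mem_S0] at hxm hym
        obtain ⟨hxS, hxn⟩ := hxm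
        obtain ⟨hyn, hyS⟩ := hym
        have h1 : Sᶜ.min' hScne ≤ y := Finset.min'_le _ _ (Finset.mem_compl.mpr hyS)
        have h2 : x ≤ S.max' hSne := Finset.le_max' _ _ hxS
        rw [Fin.le_def] at h1 h2
        have h3 : (y : ℕ) < (x : ℕ) := by omega
        exact lt_of_le_of_lt h1 (lt_of_lt_of_le h3 h2)
  rw [key, Finset.card_erase_of_mem, Finset.card_powersetCard, Finset.card_univ,
    Fintype.card_fin]
  exact Finset.mem_powersetCard.mpr ⟨Finset.subset_univ _, hS0card⟩

end MyHelpers5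
noncomputable section MyHelpers6

lemma card_pi {k ℓ : ℕ} (hℓ1 : 1 ≤ ℓ) (hℓk : ℓ < k) :
    (Finset.univ.filter (fun π : Equiv.Perm (Fin k) =>
      numDescents π⁻¹ = 1 ∧ InvDescAt π ℓ)).card = k.choose ℓ - 1 := by
  rw [← card_count hℓ1 hℓk]
  refine Finset.card_bij (fun (π : Equiv.Perm (Fin k)) _ => π⁻¹) ?_ ?_ ?_
  · intro π hm
    rw [Finset.mem_filter] at hm ⊢
    exact ⟨Finset.mem_univ _, (oneDescAt_iff_inv π hℓ1 hℓk).mp hm.2⟩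
  · intro a _ b _ h
    exact inv_injective h
  · intro τ hτ
    rw [Finset.mem_filter] at hτ
    refine ⟨τ⁻¹, Finset.mem_filter.mpr ⟨Finset.mem_univ _, ?_⟩, inv_inv τ⟩
    have := (oneDescAt_iff_inv τ⁻¹ hℓ1 hℓk)
    rw [inv_inv] at this
    exact this.mpr hτ.2

lemma card_total {k : ℕ} (hk : 1 ≤ k) :
    (Finset.univ.filter (fun π : Equiv.Perm (Fin k) => numDescents π⁻¹ = 1)).card
      = 2 ^ k - (k + 1) := by
  have hcov : (Finset.univ.filter fun π : Equiv.Perm (Fin k) => numDescents π⁻¹ = 1)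
      = (Finset.Ico 1 k).biUnion (fun ℓ => Finset.univ.filter
          fun π : Equiv.Perm (Fin k) => numDescents π⁻¹ = 1 ∧ InvDescAt π ℓ) := by
    ext π
    simp only [Finset.mem_biUnion, Finset.mem_filter, Finset.mem_univ, true_and,
      Finset.mem_Ico]
    constructor
    · intro hπ
      have hcard : (descSet π⁻¹).card = 1 := by rw [← numDescents_eq]; exact hπ
      obtain ⟨d, hd⟩ := Finset.card_eq_one.mp hcard
      have hdm : d ∈ descSet π⁻¹ := hd ▸ Finset.mem_singleton_self d
      rw [mem_descSet] at hdm
      obtain ⟨hdk, hdlt⟩ := hdm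
      refine ⟨(d : ℕ) + 1, ⟨by omega, hdk⟩, hπ, hdk, ?_⟩
      rw [pv_mk _ hdk, pv_mk _ (by omega)] at hdlt
      exact hdlt
    · rintro ⟨ℓ, -, hQ, -⟩
      exact hQ
  rw [hcov, Finset.card_biUnion]
  · rw [Finset.sum_congr rfl (fun ℓ hℓ =>
      card_pi (Finset.mem_Ico.mp hℓ).1 (Finset.mem_Ico.mp hℓ).2)]
    rw [Finset.sum_tsub_distrib _ (fun ℓ hℓ =>
      Nat.succ_le_of_lt (Nat.choose_pos (le_of_lt (Finset.mem_Ico.mp hℓ).2)))]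
    rw [Finset.sum_const, smul_eq_mul, Nat.card_Ico]
    simp only [Nat.succ_eq_add_one, Nat.zero_add, mul_one]
    have hsum : ∑ ℓ ∈ Finset.Ico 1 k, k.choose ℓ = 2 ^ k - 2 := by
      have h0 := Nat.sum_range_choose k
      have h1 : ∑ i ∈ Finset.range (k + 1), k.choose i
          = k.choose 0 + ∑ i ∈ Finset.Ico 1 (k + 1), k.choose i := by
        rw [Finset.range_eq_Ico, Finset.sum_eq_sum_Ico_succ_bot (by omega)]
      have h2 : ∑ i ∈ Finset.Ico 1 (k + 1), k.choose i
          = (∑ i ∈ Finset.Ico 1 k, k.choose i) + k.choose k :=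
        Finset.sum_Ico_succ_top hk _
      rw [Nat.choose_zero_right] at h1
      rw [Nat.choose_self] at h2
      omega
    rw [hsum]
    have := @Nat.lt_two_pow_self k
    omega
  · intro a ha b hb hab
    apply Finset.disjoint_left.mpr
    intro π hπa hπb
    rw [Finset.mem_filter] at hπa hπb
    obtain ⟨-, hQ, hda⟩ := hπa
    obtain ⟨-, -, hdb⟩ := hπb
    have h1 := (oneDescAt_iff_inv π (Finset.mem_Ico.mp ha).1 (Finset.mem_Ico.mp ha).2).mp
      ⟨hQ, hda⟩
    obtain ⟨hstep, -, -, -⟩ := h1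
    obtain ⟨hbk, hblt⟩ := hdb
    have hb1 : 1 ≤ b := (Finset.mem_Ico.mp hb).1
    have hs := hstep (b - 1) (by omega) (by omega)
    rw [show b - 1 + 1 = b by omega] at hs
    have hblt' : pv π⁻¹ b < pv π⁻¹ (b - 1) := by
      rw [pv_mk _ hbk, pv_mk _ (by omega)]
      exact hblt
    omega

lemma avoids_one {k : ℕ} : Avoids perm321 (1 : Equiv.Perm (Fin k)) := by
  intro hc
  obtain ⟨p, q, r, h1, h2, h3, h4⟩ := (contains321_iff 1).mp hc
  simp only [Equiv.Perm.coe_one, id_eq] at h3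
  exact absurd h3 (asymm h2)

lemma numDescents_one {k : ℕ} : numDescents (1 : Equiv.Perm (Fin k)) = 0 := by
  rw [numDescents_eq]
  rw [Finset.card_eq_zero]
  ext i
  simp only [Finset.notMem_empty, iff_false]
  intro hm
  rw [mem_descSet] at hm
  obtain ⟨h1, h2⟩ := hm
  rw [pv_mk _ h1, pv_mk _ (by omega)] at h2
  simp only [Equiv.Perm.coe_one, id_eq] at h2
  omega

end MyHelpers6
/-- **Counting permutations whose inverse has exactly one descent.**
(i) For `1 ≤ ℓ ≤ k-1`, the number of permutations `π` of size `k` whose inverse has exactly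
one descent, located at position `ℓ`, equals `C(k,ℓ) − 1`, and every such `π` avoids `321`.
(ii) Consequently the number of `π` of size `k` whose inverse has exactly one descent is
`2^k − (k+1)`, and `Σ_{π ∈ Av^k(321)} P_321(π) = 1`. -/
theorem card_one_inverse_descent {k : ℕ} (hk : 1 ≤ k) :
    (∀ ℓ : ℕ, 1 ≤ ℓ → ℓ ≤ k - 1 →
      ((Finset.univ.filter (fun π : Equiv.Perm (Fin k) =>
          numDescents π⁻¹ = 1 ∧ InvDescAt π ℓ)).card = k.choose ℓ - 1
        ∧ ∀ π : Equiv.Perm (Fin k),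
            numDescents π⁻¹ = 1 → InvDescAt π ℓ → Avoids perm321 π))
    ∧ (Finset.univ.filter (fun π : Equiv.Perm (Fin k) => numDescents π⁻¹ = 1)).card
        = 2 ^ k - (k + 1)
    ∧ (∑ π ∈ AvSet perm321 k, P321 π) = 1 := by
  refine ⟨fun ℓ hℓ1 hℓk1 => ⟨card_pi hℓ1 (by omega), fun π hπ _ =>
    avoids_of_one_descent π hπ⟩, card_total hk, ?_⟩
  have h1T : (1 : Equiv.Perm (Fin k)) ∈ AvSet perm321 k :=
    Finset.mem_filter.mpr ⟨Finset.mem_univ _, avoids_one⟩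
  have hnd1 : numDescents (1 : Equiv.Perm (Fin k))⁻¹ ≠ 1 := by
    rw [inv_one, numDescents_one]
    omega
  rw [← Finset.add_sum_erase _ _ h1T]
  have herase : ∑ π ∈ (AvSet perm321 k).erase 1, P321 π
      = (((Finset.univ : Finset (Equiv.Perm (Fin k))).filter
          (fun π => numDescents π⁻¹ = 1)).card : ℝ) * (1 / 2 ^ k) := by
    have hcong : ∀ π ∈ (AvSet perm321 k).erase 1,
        P321 π = if numDescents π⁻¹ = 1 then (1 : ℝ) / 2 ^ k else 0 := by
      intro π hπ
      rw [P321, if_neg (Finset.ne_of_mem_erase hπ)]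
    rw [Finset.sum_congr rfl hcong, ← Finset.sum_filter]
    have hset : ((AvSet perm321 k).erase 1).filter (fun π => numDescents π⁻¹ = 1)
        = (Finset.univ : Finset (Equiv.Perm (Fin k))).filter
            (fun π => numDescents π⁻¹ = 1) := by
      ext π
      simp only [Finset.mem_filter, Finset.mem_erase, Finset.mem_univ, true_and]
      constructor
      · exact fun h => h.2
      · intro h
        refine ⟨⟨fun he => hnd1 (he ▸ h), ?_⟩, h⟩
        exact Finset.mem_filter.mpr ⟨Finset.mem_univ _, avoids_of_one_descent π h⟩
    rw [hset, Finset.sum_const, nsmul_eq_mul]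
  rw [herase, card_total hk]
  have hval : P321 (1 : Equiv.Perm (Fin k)) = (k + 1) / 2 ^ k := by
    rw [P321, if_pos rfl]
  rw [hval]
  have h2k : (k + 1 : ℕ) ≤ 2 ^ k := @Nat.lt_two_pow_self k
  rw [Nat.cast_sub h2k]
  push_cast
  have hne : (2 : ℝ) ^ k ≠ 0 := by positivity
  field_simp
  ring
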